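/- Let Q1 and Q2 be probability measures on the real line. Then Q1 ≤_lr Q2 if and only if for every Borel set C ⊆ ℝ with Q1(C) > 0 and Q2(C) > 0, the conditional distributions satisfy Q1(·|C) ≤_st Q2(·|C), i.e. Q1((y,∞) ∩ C)/Q1(C) ≤ Q2((y,∞) ∩ C)/Q2(C) for all y ∈ ℝ. -/

import Mathlib

open MeasureTheory Set Filter

noncomputable section

/-- `g` is a (measurable, nonnegative) density of `Q` with respect to `μ`,
i.e. `Q B = ∫_B g dμ` for all Borel sets `B`. -/
def IsDensity (Q μ : Measure ℝ) (g : ℝ → ENNReal) : Prop :=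
  Measurable g ∧ ∀ B : Set ℝ, MeasurableSet B → Q B = ∫⁻ x in B, g x ∂μ

/-- Likelihood ratio order `Q1 ≤_lr Q2`: there exist a σ-finite measure `μ` and densities
`g1 = dQ1/dμ`, `g2 = dQ2/dμ` such that the ratio `g2/g1` (with values in `[0,∞]`)
is nondecreasing on the set `{g1 + g2 > 0}`. -/
def LikelihoodRatioLE (Q1 Q2 : Measure ℝ) : Prop :=
  ∃ (μ : Measure ℝ) (g1 g2 : ℝ → ENNReal), SigmaFinite μ ∧
    IsDensity Q1 μ g1 ∧ IsDensity Q2 μ g2 ∧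
    ∀ x y : ℝ, x ≤ y → 0 < g1 x + g2 x → 0 < g1 y + g2 y →
      g2 x / g1 x ≤ g2 y / g1 y

lemma ennreal_div_le_div_iff {a b c d : ENNReal} (hb0 : b ≠ 0) (hb : b ≠ ⊤)
    (hd0 : d ≠ 0) (hd : d ≠ ⊤) : a / b ≤ c / d ↔ a * d ≤ c * b := by
  rw [ENNReal.div_le_iff hb0 hb]
  have hcd : c / d * b = c * b / d := by
    rw [div_eq_mul_inv, div_eq_mul_inv, mul_right_comm]
  rw [hcd, ENNReal.le_div_iff_mul_le (Or.inl hd0) (Or.inl hd)]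

lemma forward_dir (Q1 Q2 : Measure ℝ) [IsProbabilityMeasure Q1] [IsProbabilityMeasure Q2]
    (h : LikelihoodRatioLE Q1 Q2) :
    ∀ C : Set ℝ, MeasurableSet C → 0 < Q1 C → 0 < Q2 C →
      ∀ y : ℝ, Q1 (Ioi y ∩ C) / Q1 C ≤ Q2 (Ioi y ∩ C) / Q2 C := by
  obtain ⟨μ, g1, g2, hσ, ⟨hm1, hd1⟩, ⟨hm2, hd2⟩, hmono⟩ := h
  intro C hC h1C h2C y
  set A := C ∩ Iic y with hA_def
  set B := Ioi y ∩ C with hB_def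
  have hAm : MeasurableSet A := hC.inter measurableSet_Iic
  have hBm : MeasurableSet B := measurableSet_Ioi.inter hC
  -- finiteness a.e.
  have hfin1 : ∀ᵐ x ∂μ, g1 x < ⊤ := by
    refine ae_lt_top hm1 ?_
    rw [← setLIntegral_univ, ← hd1 univ MeasurableSet.univ]
    exact measure_ne_top _ _
  have hfin2 : ∀ᵐ x ∂μ, g2 x < ⊤ := by
    refine ae_lt_top hm2 ?_
    rw [← setLIntegral_univ, ← hd2 univ MeasurableSet.univ]
    exact measure_ne_top _ _
  -- pointwise cross inequality
  have hpt : ∀ x ∈ A, ∀ z ∈ B, g1 x ≠ ⊤ → g2 x ≠ ⊤ → g1 z ≠ ⊤ → g2 z ≠ ⊤ →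
      g2 x * g1 z ≤ g1 x * g2 z := by
    intro x hx z hz hx1t hx2t hz1t hz2t
    have hxz : x ≤ z := le_trans hx.2 (le_of_lt hz.1)
    by_cases hx0 : g1 x + g2 x = 0
    · rcases add_eq_zero.mp hx0 with ⟨_, h2⟩
      simp [h2]
    by_cases hz0 : g1 z + g2 z = 0
    · rcases add_eq_zero.mp hz0 with ⟨h1, _⟩
      simp [h1]
    have hr := hmono x z hxz (pos_iff_ne_zero.mpr hx0) (pos_iff_ne_zero.mpr hz0)
    by_cases hg1z : g1 z = 0
    · simp [hg1z]
    by_cases hg2x : g2 x = 0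
    · simp [hg2x]
    by_cases hg1x : g1 x = 0
    · exfalso
      rw [hg1x, ENNReal.div_zero hg2x, top_le_iff] at hr
      rcases ENNReal.div_eq_top.mp hr with ⟨_, h⟩ | ⟨h, _⟩
      · exact hg1z h
      · exact hz2t h
    have := (ennreal_div_le_div_iff hg1x hx1t hg1z hz1t).mp hr
    calc g2 x * g1 z ≤ g2 z * g1 x := this
    _ = g1 x * g2 z := mul_comm _ _
  -- integrate over A for fixed z
  have hstep1 : ∀ z ∈ B, g1 z ≠ ⊤ → g2 z ≠ ⊤ → g1 z * Q2 A ≤ g2 z * Q1 A := by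
    intro z hz hz1t hz2t
    rw [hd1 A hAm, hd2 A hAm, ← lintegral_const_mul _ hm2, ← lintegral_const_mul _ hm1]
    refine lintegral_mono_ae ?_
    filter_upwards [ae_restrict_mem hAm, ae_restrict_of_ae hfin1,
      ae_restrict_of_ae hfin2] with x hx hx1 hx2
    calc g1 z * g2 x = g2 x * g1 z := mul_comm _ _
    _ ≤ g1 x * g2 z := hpt x hx z hz hx1.ne hx2.ne hz1t hz2t
    _ = g2 z * g1 x := mul_comm _ _
  -- integrate over B
  have key : Q1 B * Q2 A ≤ Q2 B * Q1 A := by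
    rw [mul_comm (Q1 B), mul_comm (Q2 B), hd1 B hBm, hd2 B hBm,
      ← lintegral_const_mul _ hm1, ← lintegral_const_mul _ hm2]
    refine lintegral_mono_ae ?_
    filter_upwards [ae_restrict_mem hBm, ae_restrict_of_ae hfin1,
      ae_restrict_of_ae hfin2] with z hz hz1 hz2
    calc Q2 A * g1 z = g1 z * Q2 A := mul_comm _ _
    _ ≤ g2 z * Q1 A := hstep1 z hz hz1.ne hz2.ne
    _ = Q1 A * g2 z := mul_comm _ _
  -- decompose C
  have hCdec : Q1 C = Q1 A + Q1 B ∧ Q2 C = Q2 A + Q2 B := by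
    have hU : A ∪ B = C := by
      ext z
      simp only [hA_def, hB_def, mem_union, mem_inter_iff, mem_Iic, mem_Ioi]
      constructor
      · rintro (⟨h, _⟩ | ⟨_, h⟩) <;> exact h
      · intro h
        rcases le_or_gt z y with h' | h'
        · exact Or.inl ⟨h, h'⟩
        · exact Or.inr ⟨h', h⟩
    have hdisj : Disjoint A B := by
      refine Set.disjoint_left.mpr ?_
      rintro z ⟨_, hz1⟩ ⟨hz2, _⟩
      exact absurd (mem_Iic.mp hz1) (not_le.mpr (mem_Ioi.mp hz2))
    constructor <;> rw [← hU, measure_union hdisj hBm]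
  rw [ennreal_div_le_div_iff h1C.ne' (measure_ne_top _ _) h2C.ne' (measure_ne_top _ _),
    hCdec.1, hCdec.2, mul_add, mul_add]
  exact add_le_add key (le_of_eq (mul_comm _ _))


lemma backward_dir (Q1 Q2 : Measure ℝ) [IsProbabilityMeasure Q1] [IsProbabilityMeasure Q2]
    (hst : ∀ C : Set ℝ, MeasurableSet C → 0 < Q1 C → 0 < Q2 C →
      ∀ y : ℝ, Q1 (Ioi y ∩ C) / Q1 C ≤ Q2 (Ioi y ∩ C) / Q2 C) :
    LikelihoodRatioLE Q1 Q2 := by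
  classical
  set μ : Measure ℝ := Q1 + Q2 with hμ_def
  set g2 : ℝ → ENNReal := Q2.rnDeriv μ with hg2_def
  have hg2m : Measurable g2 := Measure.measurable_rnDeriv Q2 μ
  have hQ1ac : Q1 ≪ μ := by
    intro s hs
    rw [hμ_def, Measure.add_apply, add_eq_zero] at hs
    exact hs.1
  have hQ2ac : Q2 ≪ μ := by
    intro s hs
    rw [hμ_def, Measure.add_apply, add_eq_zero] at hs
    exact hs.2
  have hQ2set : ∀ s : Set ℝ, MeasurableSet s → Q2 s = ∫⁻ x in s, g2 x ∂μ :=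
    fun s hs => (Measure.setLIntegral_rnDeriv' hQ2ac hs).symm
  -- a.e. g1 + g2 = 1
  have hsum : Q1.rnDeriv μ + g2 =ᵐ[μ] fun _ => 1 := by
    have h1 := Measure.rnDeriv_add' Q1 Q2 μ
    have h2 := Measure.rnDeriv_self μ
    filter_upwards [h1, h2] with x hx1 hx2
    show Q1.rnDeriv μ x + Q2.rnDeriv μ x = 1
    rw [← Pi.add_apply (Q1.rnDeriv μ) (Q2.rnDeriv μ), ← hx1]
    exact hx2
  have hg2le1 : ∀ᵐ x ∂μ, g2 x ≤ 1 := by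
    filter_upwards [hsum] with x hx
    calc g2 x ≤ Q1.rnDeriv μ x + g2 x := le_add_self
    _ = 1 := hx
  -- Key combinatorial fact
  have keyfact : ∀ α β : ℝ, 0 < α → α < β → β < 1 → ∀ y : ℝ,
      μ (Iic y ∩ {z | ENNReal.ofReal β < g2 z}) = 0 ∨
      μ (Ioi y ∩ {z | g2 z < ENNReal.ofReal α}) = 0 := by
    intro α β hα hαβ hβ y
    by_contra hcon
    push_neg at hcon
    obtain ⟨hA0, hB0⟩ := hcon
    set α' : ENNReal := ENNReal.ofReal α with hα'_def
    set β' : ENNReal := ENNReal.ofReal β with hβ'_def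
    set A := Iic y ∩ {z | β' < g2 z} with hA_def
    set B := Ioi y ∩ {z | g2 z < α'} with hB_def
    have hAm : MeasurableSet A := measurableSet_Iic.inter (hg2m measurableSet_Ioi)
    have hBm : MeasurableSet B := measurableSet_Ioi.inter (hg2m measurableSet_Iio)
    have hμAt : μ A ≠ ⊤ := measure_ne_top _ _
    have hμBt : μ B ≠ ⊤ := measure_ne_top _ _
    have hα'1 : α' < 1 := ENNReal.ofReal_lt_one.mpr (hαβ.trans hβ)
    have hβ'1 : β' ≤ 1 := ENNReal.ofReal_le_one.mpr hβ.le
    have hα'0 : α' ≠ 0 := (ENNReal.ofReal_pos.mpr hα).ne'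
    have hβ'0 : β' ≠ 0 := (ENNReal.ofReal_pos.mpr (hα.trans hαβ)).ne'
    -- Q2 estimates
    have hQ2A : β' * μ A ≤ Q2 A := by
      rw [hQ2set A hAm, ← setLIntegral_const A β']
      refine lintegral_mono_ae ?_
      filter_upwards [ae_restrict_mem hAm] with x hx
      exact hx.2.le
    have hQ2B : Q2 B ≤ α' * μ B := by
      rw [hQ2set B hBm, ← setLIntegral_const B α']
      refine lintegral_mono_ae ?_
      filter_upwards [ae_restrict_mem hBm] with x hx
      exact hx.2.le
    have hsumA : Q1 A + Q2 A = μ A := (Measure.add_apply _ _ _).symm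
    have hsumB : Q1 B + Q2 B = μ B := (Measure.add_apply _ _ _).symm
    -- Q1 estimates
    have hQ1A : Q1 A ≤ (1 - β') * μ A := by
      have hsplit : (1 - β') * μ A + β' * μ A = μ A := by
        rw [← add_mul, tsub_add_cancel_of_le hβ'1, one_mul]
      have h1 : Q1 A + β' * μ A ≤ (1 - β') * μ A + β' * μ A := by
        rw [hsplit, ← hsumA]
        exact add_le_add le_rfl hQ2A
      exact (ENNReal.add_le_add_iff_right (ENNReal.mul_ne_top ENNReal.ofReal_ne_top hμAt)).mp h1
    have hQ1B : (1 - α') * μ B ≤ Q1 B := by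
      have hsplit : (1 - α') * μ B + α' * μ B = μ B := by
        rw [← add_mul, tsub_add_cancel_of_le hα'1.le, one_mul]
      have h1 : (1 - α') * μ B + α' * μ B ≤ Q1 B + α' * μ B := by
        rw [hsplit, ← hsumB]
        exact add_le_add le_rfl hQ2B
      exact (ENNReal.add_le_add_iff_right (ENNReal.mul_ne_top ENNReal.ofReal_ne_top hμBt)).mp h1
    -- positivity
    have hQ2Apos : 0 < Q2 A :=
      lt_of_lt_of_le (pos_iff_ne_zero.mpr (mul_ne_zero hβ'0 hA0)) hQ2A
    have hQ1Bpos : 0 < Q1 B := by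
      refine lt_of_lt_of_le ?_ hQ1B
      exact pos_iff_ne_zero.mpr (mul_ne_zero (tsub_pos_iff_lt.mpr hα'1).ne' hB0)
    -- apply hypothesis with C = A ∪ B
    set C := A ∪ B with hC_def
    have hCm : MeasurableSet C := hAm.union hBm
    have hdisj : Disjoint A B := by
      refine Set.disjoint_left.mpr ?_
      rintro z ⟨hz1, _⟩ ⟨hz2, _⟩
      exact absurd (mem_Iic.mp hz1) (not_le.mpr (mem_Ioi.mp hz2))
    have hQ1C : Q1 C = Q1 A + Q1 B := measure_union hdisj hBm
    have hQ2C : Q2 C = Q2 A + Q2 B := measure_union hdisj hBm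
    have hQ1Cpos : 0 < Q1 C := hQ1Bpos.trans_le (measure_mono subset_union_right)
    have hQ2Cpos : 0 < Q2 C := hQ2Apos.trans_le (measure_mono subset_union_left)
    have hIoiC : Ioi y ∩ C = B := by
      ext z
      simp only [hC_def, hA_def, hB_def, mem_inter_iff, mem_union, mem_Ioi, mem_Iic,
        mem_setOf_eq]
      constructor
      · rintro ⟨hzy, ⟨hz1, _⟩ | hz⟩
        · exact absurd hz1 (not_le.mpr hzy)
        · exact hz
      · intro hz
        exact ⟨hz.1, Or.inr hz⟩
    have hineq := hst C hCm hQ1Cpos hQ2Cpos y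
    rw [hIoiC] at hineq
    rw [ennreal_div_le_div_iff hQ1Cpos.ne' (measure_ne_top _ _) hQ2Cpos.ne'
      (measure_ne_top _ _), hQ1C, hQ2C, mul_add, mul_add] at hineq
    have hcancel : Q1 B * Q2 B = Q2 B * Q1 B := mul_comm _ _
    rw [hcancel] at hineq
    have hkey : Q1 B * Q2 A ≤ Q2 B * Q1 A :=
      (ENNReal.add_le_add_iff_right
        (ENNReal.mul_ne_top (measure_ne_top _ _) (measure_ne_top _ _))).mp hineq
    -- chain
    have hchain : ((1 - α') * β') * (μ B * μ A) ≤ (α' * (1 - β')) * (μ B * μ A) := by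
      calc ((1 - α') * β') * (μ B * μ A) = ((1 - α') * μ B) * (β' * μ A) := by
            ring
      _ ≤ Q1 B * Q2 A := mul_le_mul' hQ1B hQ2A
      _ ≤ Q2 B * Q1 A := hkey
      _ ≤ (α' * μ B) * ((1 - β') * μ A) := mul_le_mul' hQ2B hQ1A
      _ = (α' * (1 - β')) * (μ B * μ A) := by ring
    have hfin : ((1 - α') * β') ≤ (α' * (1 - β')) := by
      refine (ENNReal.mul_le_mul_iff_left (mul_ne_zero hB0 hA0) 
        (ENNReal.mul_ne_top hμBt hμAt)).mp hchain
    -- contradiction in ℝ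
    have h1mα : (1 - α').toReal = 1 - α := by
      rw [ENNReal.toReal_sub_of_le hα'1.le ENNReal.one_ne_top]
      simp [hα'_def, ENNReal.toReal_ofReal hα.le]
    have h1mβ : (1 - β').toReal = 1 - β := by
      rw [ENNReal.toReal_sub_of_le hβ'1 ENNReal.one_ne_top]
      simp [hβ'_def, ENNReal.toReal_ofReal (hα.trans hαβ).le]
    have h1mβt : (1 - β') ≠ ⊤ := (tsub_le_self.trans_lt ENNReal.one_lt_top).ne
    have hR := ENNReal.toReal_mono (ENNReal.mul_ne_top ENNReal.ofReal_ne_top h1mβt) hfin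
    rw [ENNReal.toReal_mul, ENNReal.toReal_mul, h1mα, h1mβ,
      ENNReal.toReal_ofReal hα.le, ENNReal.toReal_ofReal (hα.trans hαβ).le] at hR
    nlinarith
  -- the null set
  set U : ℚ → Set ℝ := fun β => {z | ENNReal.ofReal (β : ℝ) < g2 z} with hU_def
  set L : ℚ → Set ℝ := fun α => {z | g2 z < ENNReal.ofReal (α : ℝ)} with hL_def
  set Nset : ℚ × ℚ × ℚ → Set ℝ := fun p =>
    if 0 < p.2.1 ∧ p.2.1 < p.2.2 ∧ p.2.2 < 1 then
      (if μ (Iic (p.1 : ℝ) ∩ U p.2.2) = 0 then Iic (p.1 : ℝ) ∩ U p.2.2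
       else Ioi (p.1 : ℝ) ∩ L p.2.1)
    else ∅ with hNset_def
  set N : Set ℝ := {x | 1 < g2 x} ∪ ⋃ p : ℚ × ℚ × ℚ, Nset p with hN_def
  have hNnull : μ N = 0 := by
    rw [hN_def]
    refine measure_union_null ?_ (measure_iUnion_null fun p => ?_)
    · have : {x | 1 < g2 x} = {x | ¬ g2 x ≤ 1} := by
        ext x; simp [not_le]
      rw [this]
      exact hg2le1
    · simp only [hNset_def]
      by_cases hp : 0 < p.2.1 ∧ p.2.1 < p.2.2 ∧ p.2.2 < 1
      · rw [if_pos hp]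
        by_cases h0 : μ (Iic (p.1 : ℝ) ∩ U p.2.2) = 0
        · rwa [if_pos h0]
        · rw [if_neg h0]
          rcases keyfact (p.2.1 : ℝ) (p.2.2 : ℝ) (by exact_mod_cast hp.1)
            (by exact_mod_cast hp.2.1) (by exact_mod_cast hp.2.2) (p.1 : ℝ) with h | h
          · exact absurd h h0
          · exact h
      · rw [if_neg hp]
        exact measure_empty
  -- monotonicity off N
  have hmonoN : ∀ x z : ℝ, x ∉ N → z ∉ N → x ≤ z → g2 x ≤ g2 z := by
    intro x z hxN hzN hxz
    by_contra hlt
    push_neg at hlt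
    have hx1 : g2 x ≤ 1 := by
      by_contra h
      exact hxN (Or.inl (not_le.mp h))
    have hxt : g2 x ≠ ⊤ := (hx1.trans_lt ENNReal.one_lt_top).ne
    have hzt : g2 z ≠ ⊤ := ((hlt.trans_le hx1).trans ENNReal.one_lt_top).ne
    have hab : (g2 z).toReal < (g2 x).toReal :=
      (ENNReal.toReal_lt_toReal hzt hxt).mpr hlt
    obtain ⟨α, hα1, hα2⟩ := exists_rat_btwn hab
    obtain ⟨β, hβ1, hβ2⟩ := exists_rat_btwn hα2
    have hxz' : x < z := by
      rcases lt_or_eq_of_le hxz with h | h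
      · exact h
      · exact absurd (h ▸ hlt) (lt_irrefl _)
    obtain ⟨y, hy1, hy2⟩ := exists_rat_btwn hxz'
    have hα0 : (0:ℚ) < α := by
      have : (0:ℝ) ≤ (g2 z).toReal := ENNReal.toReal_nonneg
      exact_mod_cast this.trans_lt hα1
    have hβlt1 : β < 1 := by
      have hb1 : (g2 x).toReal ≤ 1 := by
        calc (g2 x).toReal ≤ (1 : ENNReal).toReal := ENNReal.toReal_mono ENNReal.one_ne_top hx1
        _ = 1 := by simp
      exact_mod_cast hβ2.trans_le hb1
    have hαβQ : α < β := by exact_mod_cast hβ1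
    have hguard : 0 < α ∧ α < β ∧ β < 1 := ⟨hα0, hαβQ, hβlt1⟩
    have hzL : z ∈ L α := by
      show g2 z < ENNReal.ofReal (α : ℝ)
      exact (ENNReal.lt_ofReal_iff_toReal_lt hzt).mpr hα1
    have hxU : x ∈ U β := by
      show ENNReal.ofReal (β : ℝ) < g2 x
      exact (ENNReal.ofReal_lt_iff_lt_toReal (by exact_mod_cast (hα0.trans hαβQ).le) hxt).mpr hβ2
    set p : ℚ × ℚ × ℚ := (y, α, β) with hp_def
    have hxN' : x ∉ Nset p := fun h => hxN (Or.inr (mem_iUnion.mpr ⟨p, h⟩))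
    have hzN' : z ∉ Nset p := fun h => hzN (Or.inr (mem_iUnion.mpr ⟨p, h⟩))
    simp only [hNset_def, hp_def] at hxN' hzN'
    rw [if_pos hguard] at hxN' hzN'
    by_cases h0 : μ (Iic (y : ℝ) ∩ U β) = 0
    · rw [if_pos h0] at hxN'
      exact hxN' ⟨hy1.le, hxU⟩
    · rw [if_neg h0] at hzN'
      exact hzN' ⟨hy2, hzL⟩
  -- the monotone version
  set h : ℝ → ENNReal := fun x => sSup (g2 '' {z | z ∉ N ∧ z ≤ x}) with hh_def
  have hhmono : Monotone h := by
    intro x y hxy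
    exact sSup_le_sSup (image_mono (fun z hz => ⟨hz.1, hz.2.trans hxy⟩))
  have hhle1 : ∀ x, h x ≤ 1 := by
    intro x
    refine sSup_le ?_
    rintro _ ⟨z, ⟨hzN, _⟩, rfl⟩
    by_contra hc
    exact hzN (Or.inl (not_le.mp hc))
  have hheq : ∀ x, x ∉ N → h x = g2 x := by
    intro x hx
    refine le_antisymm (sSup_le ?_) (le_sSup ⟨x, ⟨hx, le_refl x⟩, rfl⟩)
    rintro _ ⟨z, ⟨hzN, hzx⟩, rfl⟩
    exact hmonoN z x hzN hx hzx
  have hg2ae : g2 =ᵐ[μ] h := by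
    refine measure_mono_null (fun x hx => ?_) hNnull
    simp only [mem_setOf_eq] at hx
    by_contra hxN
    exact hx (hheq x hxN).symm
  have hhm : Measurable h := hhmono.measurable
  set g1' : ℝ → ENNReal := fun x => 1 - h x with hg1'_def
  have hg1'm : Measurable g1' := measurable_const.sub hhm
  have hg1ae : Q1.rnDeriv μ =ᵐ[μ] g1' := by
    filter_upwards [hsum, hg2ae, hg2le1] with x hx1 hx2 hx3
    rw [hg1'_def]
    simp only
    rw [← hx2]
    have : Q1.rnDeriv μ x + g2 x = 1 := hx1
    exact ENNReal.eq_sub_of_add_eq ((hx3.trans_lt ENNReal.one_lt_top).ne) this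
  refine ⟨μ, g1', h, inferInstance, ⟨hg1'm, fun B hB => ?_⟩, ⟨hhm, fun B hB => ?_⟩, ?_⟩
  · rw [← Measure.setLIntegral_rnDeriv' hQ1ac hB]
    exact lintegral_congr_ae (ae_restrict_of_ae hg1ae)
  · rw [hQ2set B hB]
    exact lintegral_congr_ae (ae_restrict_of_ae hg2ae)
  · intro x y hxy _ _
    exact ENNReal.div_le_div (hhmono hxy) (tsub_le_tsub_left (hhmono hxy) 1)


theorem stmt_7 (Q1 Q2 : Measure ℝ) [IsProbabilityMeasure Q1] [IsProbabilityMeasure Q2] :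
    LikelihoodRatioLE Q1 Q2 ↔
    ∀ C : Set ℝ, MeasurableSet C → 0 < Q1 C → 0 < Q2 C →
      ∀ y : ℝ, Q1 (Ioi y ∩ C) / Q1 C ≤ Q2 (Ioi y ∩ C) / Q2 C := by
  exact ⟨forward_dir Q1 Q2, backward_dir Q1 Q2⟩
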